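/- Let d = 1, m > 1, q ≥ 1, r ∈ (0,1/2), and let Θ = C(r) be the r-Cantor set, with β = log 2/ log(1/r) ∈ (0,1) its Minkowski dimension. If s < 1/2 − 1/q + β/q, then the maximal estimate ‖ sup_{t∈(0,1), θ∈Θ} |S_t^m f(x + tθ)| ‖_{L^q((−1,1))} ≤ C‖f‖_{H^s(ℝ)} fails; explicitly, for f_λ with f̂_λ(ξ) = e^{−i|ξ|^m} χ_{[0,cλ]}(ξ) and λ = r^{−k}, the left-hand side is ≳ 2^{k/q} λ^{1−1/q} = λ^{β/q + 1 − 1/q}, while ‖f_λ‖_{H^s} ≲ λ^{s + 1/2}, yielding a contradiction as λ → ∞. -/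

import Mathlib

open MeasureTheory Set

def preCantor (r : ℝ) : ℕ → Set ℝ
  | 0 => Set.Icc 0 1
  | (k+1) => (fun x => r * x) '' preCantor r k ∪ (fun x => r * x + (1 - r)) '' preCantor r k

def rCantorSet (r : ℝ) : Set ℝ := ⋂ k, preCantor r k

noncomputable def S1 (m : ℝ) (fhat : ℝ → ℂ) (x t : ℝ) : ℂ :=
  ((2 * Real.pi)⁻¹ : ℝ) • ∫ ξ : ℝ, Complex.exp (Complex.I * ((x * ξ + t * |ξ| ^ m : ℝ) : ℂ)) * fhat ξ

noncomputable def HsNorm (s : ℝ) (fhat : ℝ → ℂ) : ℝ :=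
  ((2 * Real.pi)⁻¹ * ∫ ξ : ℝ, (1 + ξ ^ 2) ^ s * ‖fhat ξ‖ ^ 2) ^ ((1 : ℝ) / 2)


variable {r : ℝ}

lemma preCantor_subset_Icc (hr : 0 < r) (hr2 : r < 1/2) (k : ℕ) :
    preCantor r k ⊆ Icc 0 1 := by
  induction k with
  | zero => exact subset_rfl
  | succ k ih =>
    rintro x (⟨y, hy, rfl⟩ | ⟨y, hy, rfl⟩) <;> have h := ih hy <;>
      rw [mem_Icc] at h ⊢ <;> dsimp only <;>
      exact ⟨by nlinarith [h.1, h.2], by nlinarith [h.1, h.2]⟩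

lemma preCantor_antitone (hr : 0 < r) (hr2 : r < 1/2) (k : ℕ) :
    preCantor r (k+1) ⊆ preCantor r k := by
  induction k with
  | zero => exact preCantor_subset_Icc hr hr2 1
  | succ k ih =>
    rintro x (⟨y, hy, rfl⟩ | ⟨y, hy, rfl⟩)
    · exact Or.inl ⟨y, ih hy, rfl⟩
    · exact Or.inr ⟨y, ih hy, rfl⟩

lemma rCantor_map_left (hr : 0 < r) (hr2 : r < 1/2) {θ : ℝ} (hθ : θ ∈ rCantorSet r) :
    r * θ ∈ rCantorSet r := by
  refine mem_iInter.2 fun k => ?_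
  have h1 : r * θ ∈ preCantor r (k+1) := Or.inl ⟨θ, mem_iInter.1 hθ k, rfl⟩
  exact preCantor_antitone hr hr2 k h1

lemma rCantor_map_right (hr : 0 < r) (hr2 : r < 1/2) {θ : ℝ} (hθ : θ ∈ rCantorSet r) :
    r * θ + (1 - r) ∈ rCantorSet r := by
  refine mem_iInter.2 fun k => ?_
  have h1 : r * θ + (1 - r) ∈ preCantor r (k+1) := Or.inr ⟨θ, mem_iInter.1 hθ k, rfl⟩
  exact preCantor_antitone hr hr2 k h1

lemma zero_mem_rCantor : (0:ℝ) ∈ rCantorSet r := by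
  refine mem_iInter.2 fun k => ?_
  induction k with
  | zero => exact ⟨le_refl 0, zero_le_one⟩
  | succ k ih => exact Or.inl ⟨0, ih, by ring⟩

lemma exists_cantor_near (hr : 0 < r) (hr2 : r < 1/2) (k : ℕ) :
    ∀ y ∈ preCantor r k, ∃ θ ∈ rCantorSet r, |y - θ| ≤ r ^ k := by
  induction k with
  | zero =>
    intro y hy
    exact ⟨0, zero_mem_rCantor, by rw [sub_zero, abs_of_nonneg hy.1, pow_zero]; exact hy.2⟩
  | succ k ih =>
    rintro y (⟨z, hz, rfl⟩ | ⟨z, hz, rfl⟩)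
    · obtain ⟨θ, hθ, hd⟩ := ih z hz
      refine ⟨r * θ, rCantor_map_left hr hr2 hθ, ?_⟩
      rw [← mul_sub, abs_mul, abs_of_pos hr, pow_succ, mul_comm (r^k) r]
      exact mul_le_mul_of_nonneg_left hd hr.le
    · obtain ⟨θ, hθ, hd⟩ := ih z hz
      refine ⟨r * θ + (1 - r), rCantor_map_right hr hr2 hθ, ?_⟩
      have : r * z + (1 - r) - (r * θ + (1 - r)) = r * (z - θ) := by ring
      rw [this, abs_mul, abs_of_pos hr, pow_succ, mul_comm (r^k) r]
      exact mul_le_mul_of_nonneg_left hd hr.le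

lemma isCompact_preCantor (k : ℕ) : IsCompact (preCantor r k) := by
  induction k with
  | zero => exact isCompact_Icc
  | succ k ih =>
    exact (ih.image (continuous_const.mul continuous_id)).union
      (ih.image ((continuous_const.mul continuous_id).add continuous_const))

lemma volume_preCantor (hr : 0 < r) (hr2 : r < 1/2) (k : ℕ) :
    volume (preCantor r k) = ENNReal.ofReal ((2*r) ^ k) := by
  induction k with
  | zero => simp [preCantor]
  | succ k ih =>
    have hms : MeasurableSet (preCantor r k) := (isCompact_preCantor k).measurableSet
    have himg1 : (fun x => r * x) '' preCantor r k = (fun x => r⁻¹ * x) ⁻¹' preCantor r k := by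
      ext x
      simp only [mem_image, mem_preimage]
      constructor
      · rintro ⟨y, hy, rfl⟩; rwa [← mul_assoc, inv_mul_cancel₀ hr.ne', one_mul]
      · intro h; exact ⟨r⁻¹ * x, h, by rw [← mul_assoc, mul_inv_cancel₀ hr.ne', one_mul]⟩
    have himg2 : (fun x => r * x + (1-r)) '' preCantor r k
        = (fun x => x - (1-r)) ⁻¹' ((fun x => r * x) '' preCantor r k) := by
      ext x
      simp only [mem_image, mem_preimage]
      constructor
      · rintro ⟨y, hy, rfl⟩; exact ⟨y, hy, by ring⟩
      · rintro ⟨y, hy, h⟩; exact ⟨y, hy, by linarith⟩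
    have hv1 : volume ((fun x => r * x) '' preCantor r k)
        = ENNReal.ofReal r * volume (preCantor r k) := by
      rw [himg1, Real.volume_preimage_mul_left (by positivity : r⁻¹ ≠ 0)]
      congr 1
      rw [inv_inv, abs_of_pos hr]
    have hv2 : volume ((fun x => r * x + (1-r)) '' preCantor r k)
        = ENNReal.ofReal r * volume (preCantor r k) := by
      rw [himg2]
      rw [show (fun x : ℝ => x - (1-r)) ⁻¹' ((fun x => r * x) '' preCantor r k)
        = (fun x : ℝ => x + -(1-r)) ⁻¹' ((fun x => r * x) '' preCantor r k) by
          simp [sub_eq_add_neg]]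
      rw [measure_preimage_add_right volume _ _]
      exact hv1
    have hdisj : Disjoint ((fun x => r * x) '' preCantor r k)
        ((fun x => r * x + (1-r)) '' preCantor r k) := by
      rw [disjoint_left]
      rintro a ⟨y, hy, rfl⟩ ⟨z, hz, hz2⟩
      dsimp only at hz2
      have h1 := (preCantor_subset_Icc hr hr2 k hy)
      have h2 := (preCantor_subset_Icc hr hr2 k hz)
      nlinarith [h1.1, h1.2, h2.1, h2.2]
    have hm2 : MeasurableSet ((fun x => r * x + (1-r)) '' preCantor r k) :=
      ((isCompact_preCantor k).image
        ((continuous_const.mul continuous_id).add continuous_const)).measurableSet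
    rw [show preCantor r (k+1) = (fun x => r * x) '' preCantor r k ∪
        (fun x => r * x + (1 - r)) '' preCantor r k from rfl,
      measure_union hdisj hm2, hv1, hv2, ih, ← ENNReal.ofReal_mul hr.le,
      ← ENNReal.ofReal_add (by positivity) (by positivity)]
    congr 1
    ring



noncomputable def fhatL (m L : ℝ) : ℝ → ℂ :=
  Set.indicator (Icc 0 L) (fun ξ => Complex.exp (-(Complex.I * ((|ξ| ^ m : ℝ) : ℂ))))

variable {m L : ℝ}

lemma cont_absrpow (hm : 0 ≤ m) : Continuous fun ξ : ℝ => |ξ| ^ m :=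
  continuous_abs.rpow_const (fun x => Or.inr hm)

lemma cont_fhat_inner (hm : 0 ≤ m) :
    Continuous fun ξ : ℝ => Complex.exp (-(Complex.I * ((|ξ| ^ m : ℝ) : ℂ))) := by
  refine Complex.continuous_exp.comp (Continuous.neg ?_)
  exact continuous_const.mul (Complex.continuous_ofReal.comp (cont_absrpow hm))

lemma integrable_fhatL (hm : 0 ≤ m) : Integrable (fhatL m L) := by
  rw [fhatL, integrable_indicator_iff measurableSet_Icc]
  exact (cont_fhat_inner hm).continuousOn.integrableOn_compact isCompact_Icc

lemma norm_fhatL (ξ : ℝ) : ‖fhatL m L ξ‖ = Set.indicator (Icc 0 L) (fun _ => (1:ℝ)) ξ := by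
  rw [fhatL]
  by_cases h : ξ ∈ Icc 0 L
  · rw [indicator_of_mem h, indicator_of_mem h, Complex.norm_exp]
    norm_num [Complex.mul_re]
  · rw [indicator_of_notMem h, indicator_of_notMem h, norm_zero]

lemma integral_norm_fhatL (hL : 0 ≤ L) : ∫ ξ : ℝ, ‖fhatL m L ξ‖ = L := by
  simp_rw [norm_fhatL]
  rw [integral_indicator measurableSet_Icc]
  simp [Real.volume_Icc, hL]

lemma S1_upper (hm : 0 ≤ m) (hL : 0 ≤ L) (x t : ℝ) :
    ‖S1 m (fhatL m L) x t‖ ≤ (2 * Real.pi)⁻¹ * L := by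
  rw [S1, norm_smul, Real.norm_eq_abs, abs_of_pos (show (0:ℝ) < (2*Real.pi)⁻¹ by positivity)]
  have h1 : ‖∫ ξ : ℝ, Complex.exp (Complex.I * ((x * ξ + t * |ξ| ^ m : ℝ) : ℂ)) * fhatL m L ξ‖
      ≤ ∫ ξ : ℝ, ‖fhatL m L ξ‖ := by
    refine (norm_integral_le_integral_norm _).trans ?_
    refine integral_mono_of_nonneg (Filter.Eventually.of_forall fun ξ => norm_nonneg _)
      ((integrable_fhatL hm).norm) (Filter.Eventually.of_forall fun ξ => ?_)
    dsimp only
    rw [norm_mul, Complex.norm_exp]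
    have : (Complex.I * ((x * ξ + t * |ξ| ^ m : ℝ) : ℂ)).re = 0 := by
      simp [Complex.mul_re]
    rw [this, Real.exp_zero, one_mul]
  have h2 := integral_norm_fhatL (m := m) (L := L) hL
  exact mul_le_mul_of_nonneg_left (h1.trans h2.le) (by positivity)

lemma S1_lower (hm : 0 ≤ m) (hL : 0 < L) {ρ t : ℝ}
    (hphase : ∀ ξ ∈ Icc (0:ℝ) L, |ρ * ξ + (t - 1) * |ξ| ^ m| ≤ 1/2) :
    (2 * Real.pi)⁻¹ * (L / 2) ≤ ‖S1 m (fhatL m L) ρ t‖ := by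
  have hinteq : (fun ξ : ℝ => Complex.exp (Complex.I * ((ρ * ξ + t * |ξ| ^ m : ℝ) : ℂ)) * fhatL m L ξ)
      = Set.indicator (Icc 0 L) (fun ξ => Complex.exp (Complex.I * ((ρ * ξ + (t - 1) * |ξ| ^ m : ℝ) : ℂ))) := by
    funext ξ
    rw [fhatL]
    by_cases h : ξ ∈ Icc 0 L
    · rw [indicator_of_mem h, indicator_of_mem h, ← Complex.exp_add]
      congr 1
      push_cast
      ring
    · rw [indicator_of_notMem h, indicator_of_notMem h, mul_zero]
  have hcont : Continuous fun ξ : ℝ => Complex.exp (Complex.I * ((ρ * ξ + (t - 1) * |ξ| ^ m : ℝ) : ℂ)) := by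
    apply Complex.continuous_exp.comp
    apply continuous_const.mul
    exact Complex.continuous_ofReal.comp
      ((continuous_const.mul continuous_id).add (continuous_const.mul (cont_absrpow hm)))
  have hint : IntegrableOn (fun ξ : ℝ => Complex.exp (Complex.I * ((ρ * ξ + (t - 1) * |ξ| ^ m : ℝ) : ℂ)))
      (Icc 0 L) := hcont.continuousOn.integrableOn_compact isCompact_Icc
  rw [S1, hinteq, integral_indicator measurableSet_Icc, norm_smul]
  have hre : (∫ ξ in Icc (0:ℝ) L, Complex.exp (Complex.I * ((ρ * ξ + (t - 1) * |ξ| ^ m : ℝ) : ℂ))).re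
      = ∫ ξ in Icc (0:ℝ) L, Real.cos (ρ * ξ + (t - 1) * |ξ| ^ m) := by
    have h := integral_re (𝕜 := ℂ) hint
    simp only [RCLike.re_to_complex] at h
    rw [← h]
    congr 1
    funext ξ
    rw [mul_comm Complex.I]
    exact Complex.exp_ofReal_mul_I_re _
  have hcos : ∀ ξ ∈ Icc (0:ℝ) L, (1/2 : ℝ) ≤ Real.cos (ρ * ξ + (t - 1) * |ξ| ^ m) := by
    intro ξ hξ
    have h := hphase ξ hξ
    have h2 : (ρ * ξ + (t - 1) * |ξ| ^ m) ^ 2 ≤ (1/2)^2 := by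
      have h' := abs_le.mp h
      nlinarith [h'.1, h'.2]
    nlinarith [Real.one_sub_sq_div_two_le_cos (x := ρ * ξ + (t - 1) * |ξ| ^ m)]
  have hcosint : IntegrableOn (fun ξ => Real.cos (ρ * ξ + (t - 1) * |ξ| ^ m)) (Icc (0:ℝ) L) := by
    apply ContinuousOn.integrableOn_compact isCompact_Icc
    exact (Real.continuous_cos.comp ((continuous_const.mul continuous_id).add
      (continuous_const.mul (cont_absrpow hm)))).continuousOn
  have hlow : (1/2 : ℝ) * (volume (Icc (0:ℝ) L)).toReal
      ≤ ∫ ξ in Icc (0:ℝ) L, Real.cos (ρ * ξ + (t - 1) * |ξ| ^ m) :=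
    setIntegral_ge_of_const_le_real measurableSet_Icc measure_Icc_lt_top.ne hcos hcosint
  have hvol : (volume (Icc (0:ℝ) L)).toReal = L := by
    simp [Real.volume_Icc, hL.le]
  have habs : L / 2 ≤ ‖∫ ξ in Icc (0:ℝ) L, Complex.exp (Complex.I * ((ρ * ξ + (t - 1) * |ξ| ^ m : ℝ) : ℂ))‖ := by
    calc L / 2 = (1/2 : ℝ) * L := by ring
      _ ≤ (∫ ξ in Icc (0:ℝ) L, Complex.exp (Complex.I * ((ρ * ξ + (t - 1) * |ξ| ^ m : ℝ) : ℂ))).re := by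
          rw [hre]; rw [hvol] at hlow; exact hlow
      _ ≤ ‖∫ ξ in Icc (0:ℝ) L, Complex.exp (Complex.I * ((ρ * ξ + (t - 1) * |ξ| ^ m : ℝ) : ℂ))‖ :=
          (Complex.abs_re_le_norm _).trans' (le_abs_self _)
  calc (2 * Real.pi)⁻¹ * (L / 2)
      ≤ (2 * Real.pi)⁻¹ * ‖∫ ξ in Icc (0:ℝ) L, Complex.exp (Complex.I * ((ρ * ξ + (t - 1) * |ξ| ^ m : ℝ) : ℂ))‖ :=
        mul_le_mul_of_nonneg_left habs (by positivity)
    _ = ‖((2 * Real.pi)⁻¹ : ℝ)‖ * ‖∫ ξ in Icc (0:ℝ) L, Complex.exp (Complex.I * ((ρ * ξ + (t - 1) * |ξ| ^ m : ℝ) : ℂ))‖ := by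
        rw [Real.norm_eq_abs, abs_of_pos (by positivity)]



lemma continuous_S1 {m : ℝ} (hm : 0 ≤ m) (fhat : ℝ → ℂ) (hf : Integrable fhat) (t : ℝ) :
    Continuous fun x => S1 m fhat x t := by
  apply Continuous.const_smul (c := ((2 * Real.pi)⁻¹ : ℝ)) (g := fun x => ∫ ξ : ℝ, Complex.exp (Complex.I * ((x * ξ + t * |ξ| ^ m : ℝ) : ℂ)) * fhat ξ)
  apply continuous_of_dominated (bound := fun ξ => ‖fhat ξ‖)
  · intro x
    apply AEStronglyMeasurable.mul _ hf.1
    apply Continuous.aestronglyMeasurable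
    exact Complex.continuous_exp.comp (continuous_const.mul
      (Complex.continuous_ofReal.comp (by fun_prop (disch := assumption))))
  · intro x
    refine Filter.Eventually.of_forall fun ξ => ?_
    rw [norm_mul, Complex.norm_exp]
    have : (Complex.I * ((x * ξ + t * |ξ| ^ m : ℝ) : ℂ)).re = 0 := by
      simp [Complex.mul_re]
    rw [this, Real.exp_zero, one_mul]
  · exact hf.norm
  · refine Filter.Eventually.of_forall fun ξ => ?_
    apply Continuous.mul _ continuous_const
    apply Complex.continuous_exp.comp
    apply continuous_const.mul
    apply Complex.continuous_ofReal.comp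
    exact (continuous_id.mul continuous_const).add continuous_const

section supmeas
variable {ι κ : Sort*} [Nonempty ι] [Nonempty κ]

lemma biSup_le_of_forall {g : ι → κ → ℝ} {M : ℝ} (hb : ∀ i j, g i j ≤ M) :
    (⨆ i, ⨆ j, g i j) ≤ M :=
  ciSup_le fun i => ciSup_le fun j => hb i j

lemma le_biSup_of_bdd {g : ι → κ → ℝ} {M : ℝ} (hb : ∀ i j, g i j ≤ M) (i : ι) (j : κ) :
    g i j ≤ ⨆ i, ⨆ j, g i j := by
  have h1 : g i j ≤ ⨆ j, g i j :=
    le_ciSup ⟨M, by rintro _ ⟨j', rfl⟩; exact hb i j'⟩ j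
  refine h1.trans ?_
  exact le_ciSup (f := fun i => ⨆ j, g i j)
    ⟨M, by rintro _ ⟨i', rfl⟩; exact ciSup_le fun j' => hb i' j'⟩ i

lemma measurable_biSup_cont {g : ι → κ → ℝ → ℝ} {M : ℝ}
    (hb : ∀ i j x, g i j x ≤ M) (hc : ∀ i j, Continuous (g i j)) :
    Measurable fun x => ⨆ i, ⨆ j, g i j x := by
  apply LowerSemicontinuous.measurable
  intro x₀ c hlt
  have hbdd1 : BddAbove (range fun i => ⨆ j, g i j x₀) :=
    ⟨M, by rintro _ ⟨i, rfl⟩; exact ciSup_le fun j => hb i j x₀⟩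
  change c < ⨆ i, ⨆ j, g i j x₀ at hlt
  rw [lt_ciSup_iff hbdd1] at hlt
  obtain ⟨i, hi⟩ := hlt
  rw [lt_ciSup_iff ⟨M, by rintro _ ⟨j, rfl⟩; exact hb i j x₀⟩] at hi
  obtain ⟨j, hj⟩ := hi
  have hev : ∀ᶠ x in nhds x₀, c < g i j x :=
    Filter.Tendsto.eventually_const_lt hj (hc i j).continuousAt
  exact hev.mono fun x hx => hx.trans_le (le_biSup_of_bdd (fun i j => hb i j x) i j)
end supmeas





lemma pointwise_rpow_bound {s₀ ξ : ℝ} (hξ : 0 ≤ ξ) :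
    ((1 + ξ^2 : ℝ)) ^ s₀ ≤ 2 ^ |s₀| * (1 + ξ) ^ (2 * s₀) := by
  have h1 : (0:ℝ) < 1 + ξ^2 := by positivity
  have h2 : (0:ℝ) < 1 + ξ := by linarith
  have hsq : (1 + ξ) ^ (2 * s₀) = ((1 + ξ)^2 : ℝ) ^ s₀ := by
    rw [Real.rpow_mul h2.le, Real.rpow_two]
  rcases le_or_gt 0 s₀ with hs | hs
  · have hb : (1 + ξ^2 : ℝ) ≤ (1 + ξ)^2 := by nlinarith
    have : ((1 + ξ^2 : ℝ)) ^ s₀ ≤ ((1 + ξ)^2 : ℝ) ^ s₀ := Real.rpow_le_rpow h1.le hb hs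
    refine this.trans ?_
    rw [hsq]
    have h1le : (1:ℝ) ≤ 2 ^ |s₀| :=
      Real.one_le_rpow one_le_two (abs_nonneg _)
    nlinarith [Real.rpow_nonneg (by positivity : (0:ℝ) ≤ (1+ξ)^2) s₀]
  · have hb : ((1 + ξ)^2 : ℝ) / 2 ≤ 1 + ξ^2 := by nlinarith [sq_nonneg (ξ - 1)]
    have hpos : (0:ℝ) < ((1 + ξ)^2) / 2 := by positivity
    have : ((1 + ξ^2 : ℝ)) ^ s₀ ≤ (((1 + ξ)^2 : ℝ) / 2) ^ s₀ :=
      Real.rpow_le_rpow_of_nonpos hpos hb hs.le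
    refine this.trans ?_
    rw [Real.div_rpow (by positivity) (by norm_num), hsq, div_le_iff₀ (by positivity)]
    rw [abs_of_neg hs]
    have key : (2:ℝ)^(-s₀) * 2^s₀ = 1 := by
      rw [← Real.rpow_add (by norm_num : (0:ℝ) < 2), neg_add_cancel, Real.rpow_zero]
    have hre : (2:ℝ)^(-s₀) * ((1+ξ)^2)^s₀ * 2^s₀ = ((1+ξ)^2 : ℝ)^s₀ * ((2:ℝ)^(-s₀) * 2^s₀) := by
      ring
    rw [hre, key, mul_one]

lemma Hs_fhatL_bound {m s s₀ L lam : ℝ} (hs₀ : -(1/2) < s₀) (hL : 0 < L)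
    (hlam : 1 + L ≤ lam) (hss : s ≤ s₀) :
    HsNorm s (fhatL m L) ≤ (2 ^ |s₀| / (2*s₀+1)) ^ ((1:ℝ)/2) * lam ^ (s₀ + 1/2) := by
  have hlam1 : (1:ℝ) ≤ lam := by linarith
  have hcont : ∀ σ : ℝ, ContinuousOn (fun ξ : ℝ => (1 + ξ^2) ^ σ) (Icc 0 L) := by
    intro σ
    apply ContinuousOn.rpow_const (by fun_prop)
    intro ξ _
    left; positivity
  have hint : ∀ σ : ℝ, IntegrableOn (fun ξ : ℝ => (1 + ξ^2) ^ σ) (Icc 0 L) :=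
    fun σ => (hcont σ).integrableOn_compact isCompact_Icc
  -- step 1: rewrite the integral
  have heq : (fun ξ : ℝ => (1 + ξ ^ 2) ^ s * ‖fhatL m L ξ‖ ^ 2)
      = Set.indicator (Icc 0 L) (fun ξ => (1 + ξ^2) ^ s) := by
    funext ξ
    rw [norm_fhatL]
    by_cases h : ξ ∈ Icc 0 L
    · rw [indicator_of_mem h, indicator_of_mem h]; norm_num
    · rw [indicator_of_notMem h, indicator_of_notMem h]; norm_num
  have hI1 : ∫ ξ : ℝ, (1 + ξ ^ 2) ^ s * ‖fhatL m L ξ‖ ^ 2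
      = ∫ ξ in Icc (0:ℝ) L, (1 + ξ^2) ^ s := by
    rw [heq, integral_indicator measurableSet_Icc]
  -- step 2: monotone in exponent
  have hI2 : ∫ ξ in Icc (0:ℝ) L, (1 + ξ^2) ^ s ≤ ∫ ξ in Icc (0:ℝ) L, (1 + ξ^2) ^ s₀ := by
    apply setIntegral_mono_on (hint s) (hint s₀) measurableSet_Icc
    intro ξ _
    exact Real.rpow_le_rpow_of_exponent_le (by nlinarith) hss
  -- step 3: pointwise bound
  have hI3 : ∫ ξ in Icc (0:ℝ) L, (1 + ξ^2) ^ s₀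
      ≤ ∫ ξ in Icc (0:ℝ) L, 2 ^ |s₀| * (1 + ξ) ^ (2*s₀) := by
    apply setIntegral_mono_on (hint s₀) _ measurableSet_Icc
    · intro ξ hξ
      exact pointwise_rpow_bound hξ.1
    · apply Integrable.const_mul
      apply ContinuousOn.integrableOn_compact isCompact_Icc
      apply ContinuousOn.rpow_const (by fun_prop)
      intro ξ hξ
      left
      have := hξ.1
      positivity
  -- step 4: compute
  have hexp : (0:ℝ) < 2*s₀ + 1 := by linarith
  have hI4 : ∫ ξ in Icc (0:ℝ) L, (1 + ξ) ^ (2*s₀) ≤ lam ^ (2*s₀+1) / (2*s₀+1) := by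
    have e1 : ∫ ξ in Icc (0:ℝ) L, (1 + ξ) ^ (2*s₀) = ∫ ξ in (0:ℝ)..L, (ξ + 1) ^ (2*s₀) := by
      rw [integral_Icc_eq_integral_Ioc, intervalIntegral.integral_of_le hL.le]
      congr 1
      funext ξ
      rw [add_comm]
    have e2 : ∫ ξ in (0:ℝ)..L, (ξ + 1) ^ (2*s₀) = ∫ u in (1:ℝ)..(L+1), u ^ (2*s₀) := by
      have := intervalIntegral.integral_comp_add_right (a := (0:ℝ)) (b := L)
        (fun u : ℝ => u ^ (2*s₀)) 1
      simpa using this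
    have e3 : ∫ u in (1:ℝ)..(L+1), u ^ (2*s₀) = ((L+1) ^ (2*s₀+1) - 1 ^ (2*s₀+1)) / (2*s₀+1) :=
      integral_rpow (Or.inl (by linarith))
    rw [e1, e2, e3, Real.one_rpow]
    have h5 : (L+1) ^ (2*s₀+1) ≤ lam ^ (2*s₀+1) :=
      Real.rpow_le_rpow (by linarith) (by linarith) hexp.le
    gcongr
    linarith
  -- assemble
  have hnn : (0:ℝ) ≤ ∫ ξ in Icc (0:ℝ) L, (1 + ξ^2) ^ s :=
    setIntegral_nonneg measurableSet_Icc (fun ξ _ => Real.rpow_nonneg (by positivity) _)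
  have h2pi : (2 * Real.pi)⁻¹ ≤ (1:ℝ) := by
    rw [inv_le_one_iff₀]
    right
    nlinarith [Real.pi_gt_three]
  have hchain : (2 * Real.pi)⁻¹ * ∫ ξ : ℝ, (1 + ξ ^ 2) ^ s * ‖fhatL m L ξ‖ ^ 2
      ≤ (2 ^ |s₀| / (2*s₀+1)) * lam ^ (2*s₀+1) := by
    rw [hI1]
    have hc1 : ∫ ξ in Icc (0:ℝ) L, (1 + ξ^2) ^ s
        ≤ 2 ^ |s₀| * (lam ^ (2*s₀+1) / (2*s₀+1)) := by
      refine (hI2.trans hI3).trans ?_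
      rw [integral_const_mul]
      have h2p : (0:ℝ) ≤ 2 ^ |s₀| := Real.rpow_nonneg (by norm_num) _
      exact mul_le_mul_of_nonneg_left hI4 h2p
    calc (2 * Real.pi)⁻¹ * ∫ ξ in Icc (0:ℝ) L, (1 + ξ^2) ^ s
        ≤ 1 * ∫ ξ in Icc (0:ℝ) L, (1 + ξ^2) ^ s := mul_le_mul_of_nonneg_right h2pi hnn
      _ = ∫ ξ in Icc (0:ℝ) L, (1 + ξ^2) ^ s := one_mul _
      _ ≤ 2 ^ |s₀| * (lam ^ (2*s₀+1) / (2*s₀+1)) := hc1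
      _ = (2 ^ |s₀| / (2*s₀+1)) * lam ^ (2*s₀+1) := by ring
  rw [HsNorm]
  have hbase : (0:ℝ) ≤ (2 * Real.pi)⁻¹ * ∫ ξ : ℝ, (1 + ξ ^ 2) ^ s * ‖fhatL m L ξ‖ ^ 2 := by
    rw [hI1]
    positivity
  refine (Real.rpow_le_rpow hbase hchain (by norm_num)).trans ?_
  have h2p : (0:ℝ) ≤ 2 ^ |s₀| / (2*s₀+1) := by
    have := Real.rpow_nonneg (show (0:ℝ) ≤ 2 by norm_num) |s₀|
    positivity
  rw [Real.mul_rpow h2p (Real.rpow_nonneg (by linarith) _),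
    ← Real.rpow_mul (show (0:ℝ) ≤ lam by linarith),
    show (2*s₀+1) * ((1:ℝ)/2) = s₀ + 1/2 by ring]
lemma S1_cantor_lower {m : ℝ} (hm : 1 < m) {lam : ℝ} (hlam : 2 < lam) {y θ : ℝ}
    (hθ0 : 0 ≤ θ) (hθ1 : θ ≤ 1) (hd : |y - θ| ≤ lam⁻¹) :
    lam / 128 ≤ ‖S1 m (fhatL m (lam/8))
      (-y + (1 - (lam ^ m)⁻¹/8) * θ) (1 - (lam ^ m)⁻¹/8)‖ := by
  have hm0 : (0:ℝ) ≤ m := by linarith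
  have hlampos : (0:ℝ) < lam := by linarith
  have hlam1 : (1:ℝ) ≤ lam := by linarith
  have hlammpos : 0 < lam ^ m := Real.rpow_pos_of_pos hlampos m
  have hlamm : lam ≤ lam ^ m := by
    calc lam = lam ^ (1:ℝ) := (Real.rpow_one lam).symm
    _ ≤ lam ^ m := Real.rpow_le_rpow_of_exponent_le hlam1 hm.le
  set L : ℝ := lam / 8 with hL
  have hLpos : 0 < L := by positivity
  set τ : ℝ := (lam ^ m)⁻¹ / 8 with hτ
  have hτpos : 0 < τ := by positivity
  set t : ℝ := 1 - τ with ht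
  have hphase : ∀ ξ ∈ Set.Icc (0:ℝ) L,
      |(-y + t * θ) * ξ + (t - 1) * |ξ| ^ m| ≤ 1/2 := by
    intro ξ hξ
    have hξ0 : 0 ≤ ξ := hξ.1
    have hξL : ξ ≤ L := hξ.2
    have habsξ : |ξ| = ξ := abs_of_nonneg hξ0
    have hρ : -y + t * θ = (θ - y) - τ * θ := by rw [ht]; ring
    have ht1 : t - 1 = -τ := by rw [ht]; ring
    rw [hρ, ht1, habsξ]
    have hξm0 : 0 ≤ ξ ^ m := Real.rpow_nonneg hξ0 m
    have hξmL : ξ ^ m ≤ L ^ m := Real.rpow_le_rpow hξ0 hξL hm0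
    have hρabs : |(θ - y) - τ * θ| ≤ lam⁻¹ + τ := by
      refine (abs_sub _ _).trans ?_
      have h1 : |θ - y| ≤ lam⁻¹ := by rw [abs_sub_comm]; exact hd
      have h2 : |τ * θ| ≤ τ := by
        rw [abs_mul, abs_of_pos hτpos]
        nlinarith [abs_of_nonneg hθ0]
      linarith
    have hterm1 : |((θ - y) - τ * θ) * ξ| ≤ (lam⁻¹ + τ) * L := by
      rw [abs_mul, habsξ]
      have h0 : (0:ℝ) ≤ lam⁻¹ + τ := by positivity
      exact mul_le_mul hρabs hξL hξ0 h0
    have hterm2 : |(-τ) * ξ ^ m| ≤ τ * L ^ m := by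
      rw [abs_mul, abs_neg, abs_of_pos hτpos, abs_of_nonneg hξm0]
      exact mul_le_mul_of_nonneg_left hξmL hτpos.le
    have hbig : (lam⁻¹ + τ) * L + τ * L ^ m ≤ 1/2 := by
      have e1 : lam⁻¹ * L = 1/8 := by
        rw [hL]; field_simp
      have e2 : τ * L ≤ 1/64 := by
        rw [hτ, hL]
        rw [show (lam ^ m)⁻¹ / 8 * (lam / 8) = lam / lam ^ m / 64 by ring]
        have hd1 : lam / lam ^ m ≤ 1 := by
          rw [div_le_one hlammpos]; exact hlamm
        linarith
      have e3 : τ * L ^ m ≤ 1/64 := by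
        rw [hτ, hL, Real.div_rpow hlampos.le (by norm_num)]
        rw [show (lam ^ m)⁻¹ / 8 * (lam ^ m / 8 ^ m) = (lam ^ m)⁻¹ * lam ^ m / (8 * 8 ^ m) by
          ring]
        rw [inv_mul_cancel₀ hlammpos.ne']
        have h8 : (8:ℝ) ≤ 8 ^ m := by
          calc (8:ℝ) = 8 ^ (1:ℝ) := (Real.rpow_one 8).symm
          _ ≤ 8 ^ m := Real.rpow_le_rpow_of_exponent_le (by norm_num) hm.le
        rw [div_le_iff₀ (by positivity)]
        nlinarith
      nlinarith [mul_pos (inv_pos.2 hlampos) hLpos]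
    calc |((θ - y) - τ * θ) * ξ + (-τ) * ξ ^ m|
        ≤ |((θ - y) - τ * θ) * ξ| + |(-τ) * ξ ^ m| := abs_add_le _ _
      _ ≤ (lam⁻¹ + τ) * L + τ * L ^ m := add_le_add hterm1 hterm2
      _ ≤ 1/2 := hbig
  have h := S1_lower hm0 hLpos (ρ := -y + t * θ) (t := t) hphase
  refine le_trans ?_ h
  have hpi : (2 * Real.pi) ≤ 8 := by nlinarith [Real.pi_lt_d2]
  have h2pi : (8:ℝ)⁻¹ ≤ (2 * Real.pi)⁻¹ := inv_anti₀ (by positivity) hpi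
  calc lam / 128 = (8:ℝ)⁻¹ * (L/2) := by rw [hL]; ring
    _ ≤ (2 * Real.pi)⁻¹ * (L/2) := mul_le_mul_of_nonneg_right h2pi (by positivity)
set_option maxHeartbeats 2000000 in
theorem cantor_lines_maximal_fails (m q r s : ℝ) (hm : 1 < m) (hq : 1 ≤ q)
    (hr : 0 < r) (hr2 : r < 1/2)
    (hs : s < 1/2 - 1/q + (Real.log 2 / Real.log (1/r)) / q) :
    ¬ ∃ C : ℝ, 0 < C ∧ ∀ fhat : ℝ → ℂ, Integrable fhat →
      (∫ x in Set.Ioo (-1:ℝ) 1,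
          (⨆ (t : Set.Ioo (0:ℝ) 1) (θ : rCantorSet r),
            ‖S1 m fhat (x + (t:ℝ) * (θ:ℝ)) t‖) ^ q) ^ (1/q) ≤ C * HsNorm s fhat := by
  rintro ⟨C, hC, hbound⟩
  have hm0 : (0:ℝ) ≤ m := by linarith
  have hq0 : (0:ℝ) < q := by linarith
  -- basic constants
  set x0 : ℝ := 1/r with hx0
  have hx1 : (2:ℝ) < x0 := by
    rw [hx0, lt_div_iff₀ hr]; linarith
  have hx1' : (1:ℝ) < x0 := by linarith
  have hx0pos : (0:ℝ) < x0 := by linarith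
  set β : ℝ := Real.log 2 / Real.log (1/r) with hβ
  have hlogx : 0 < Real.log x0 := Real.log_pos hx1'
  have hβpos : 0 < β := by
    rw [hβ]
    exact div_pos (Real.log_pos (by norm_num)) hlogx
  have hβlt : β < 1 := by
    rw [hβ]
    rw [div_lt_one hlogx]
    exact Real.log_lt_log (by norm_num) hx1
  have hxβ : x0 ^ β = 2 := by
    have : β = Real.logb x0 2 := by rw [Real.logb, hβ]
    rw [this]
    exact Real.rpow_logb (by linarith) (by linarith) (by norm_num)
  set A : ℝ := 1/2 - 1/q + β/q with hA
  have hAgt : -(1/2) < A := by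
    have h1 : (1-β)/q ≤ 1-β := by
      rw [div_le_iff₀ hq0]
      nlinarith
    have h2 : A = 1/2 - (1-β)/q := by rw [hA]; ring
    rw [h2]
    linarith
  set s₀ : ℝ := max s (A/2 - 1/4) with hs₀
  have hs₀A : s₀ < A := by
    rw [hs₀]
    apply max_lt
    · exact hs
    · linarith
  have hs₀gt : -(1/2) < s₀ := by
    rw [hs₀]
    have : -(1/2) < A/2 - 1/4 := by linarith
    exact this.trans_le (le_max_right _ _)
  have hss : s ≤ s₀ := le_max_left _ _
  set δ : ℝ := A - s₀ with hδ
  have hδpos : 0 < δ := by rw [hδ]; linarith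
  set C₁ : ℝ := (2 ^ |s₀| / (2*s₀+1)) ^ ((1:ℝ)/2) with hC₁
  have hC₁nn : 0 ≤ C₁ := Real.rpow_nonneg
    (div_nonneg (Real.rpow_nonneg (by norm_num) _) (by linarith)) _
  -- choose k
  set b : ℝ := x0 ^ δ with hb
  have hb1 : 1 < b :=
    (Real.one_lt_rpow_iff_of_pos hx0pos).2 (Or.inl ⟨hx1', hδpos⟩)
  obtain ⟨k, hk⟩ := pow_unbounded_of_one_lt (max (128 * C * C₁) 1) hb1
  have hk0 : k ≠ 0 := by
    rintro rfl
    simp only [pow_zero] at hk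
    have := le_max_right (128 * C * C₁) 1
    linarith
  set lam : ℝ := x0 ^ k with hlam
  have hlampos : 0 < lam := by positivity
  have hlam2 : 2 < lam := by
    calc (2:ℝ) < x0 := hx1
    _ ≤ x0 ^ k := le_self_pow₀ (by linarith) hk0
  have hlam1 : 1 ≤ lam := by linarith
  have hlaminv : lam⁻¹ = r ^ k := by
    rw [hlam, hx0, one_div, inv_pow, inv_inv]
  -- lam^m ≥ lam
  have hlamm : lam ≤ lam ^ m := by
    calc lam = lam ^ (1:ℝ) := (Real.rpow_one lam).symm
    _ ≤ lam ^ m := Real.rpow_le_rpow_of_exponent_le hlam1 hm.le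
  have hlammpos : 0 < lam ^ m := Real.rpow_pos_of_pos hlampos m
  set L : ℝ := lam / 8 with hL
  have hLpos : 0 < L := by positivity
  set τ : ℝ := (lam ^ m)⁻¹ / 8 with hτ
  have hτpos : 0 < τ := by positivity
  have hτle : τ ≤ 1/16 := by
    rw [hτ]
    have : (lam ^ m)⁻¹ ≤ 1/2 := by
      rw [inv_le_comm₀ hlammpos (by norm_num)]
      linarith
    linarith
  set t : ℝ := 1 - τ with ht
  have htmem : t ∈ Set.Ioo (0:ℝ) 1 := ⟨by rw [ht]; linarith, by rw [ht]; linarith⟩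
  set fhat : ℝ → ℂ := fhatL m L with hfhat
  have hfint : Integrable fhat := integrable_fhatL hm0
  have hineq := hbound fhat hfint
  -- index type instances
  haveI : Nonempty (Set.Ioo (0:ℝ) 1) := ⟨⟨1/2, by norm_num⟩⟩
  haveI : Nonempty (rCantorSet r) := ⟨⟨0, zero_mem_rCantor⟩⟩
  -- uniform bound M
  set M : ℝ := (2 * Real.pi)⁻¹ * L with hM
  have hgM : ∀ (t' : Set.Ioo (0:ℝ) 1) (θ : rCantorSet r) (x : ℝ),
      ‖S1 m fhat (x + (t':ℝ) * (θ:ℝ)) t'‖ ≤ M := fun t' θ x => S1_upper hm0 hLpos.le _ _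
  set F : ℝ → ℝ := fun x => ⨆ (t' : Set.Ioo (0:ℝ) 1) (θ : rCantorSet r),
      ‖S1 m fhat (x + (t':ℝ) * (θ:ℝ)) t'‖ with hF
  have hFM : ∀ x, F x ≤ M := fun x => biSup_le_of_forall (fun t' θ => hgM t' θ x)
  have hFnn : ∀ x, 0 ≤ F x := fun x =>
    (norm_nonneg _).trans (le_biSup_of_bdd (fun t' θ => hgM t' θ x)
      ⟨1/2, by norm_num⟩ ⟨0, zero_mem_rCantor⟩)
  have hFmeas : Measurable F := by
    apply measurable_biSup_cont (M := M) (fun t' θ x => hgM t' θ x)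
    intro t' θ
    exact (((continuous_S1 hm0 fhat hfint t').comp
      (continuous_id.add continuous_const)).norm)
  -- integrability of F^q on Ioo
  have hgq_meas : Measurable fun x => F x ^ q := hFmeas.pow_const q
  have hInt : IntegrableOn (fun x => F x ^ q) (Set.Ioo (-1:ℝ) 1) := by
    apply Integrable.mono' (g := fun _ => M ^ q)
      (integrable_const _) hgq_meas.aestronglyMeasurable.restrict
    refine Filter.Eventually.of_forall fun x => ?_
    rw [Real.norm_eq_abs, abs_of_nonneg (Real.rpow_nonneg (hFnn x) q)]
    exact Real.rpow_le_rpow (hFnn x) (hFM x) hq0.le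
  -- good set S
  set P : Set ℝ := preCantor r k with hP
  set Sg : Set ℝ := (Neg.neg ⁻¹' P) ∩ Set.Ioo (-1:ℝ) 1 with hSg
  have hPmeas : MeasurableSet P := (isCompact_preCantor k).measurableSet
  have hSgmeas : MeasurableSet Sg :=
    (hPmeas.preimage measurable_neg).inter measurableSet_Ioo
  have hSgsub : Sg ⊆ Set.Ioo (-1:ℝ) 1 := Set.inter_subset_right
  have hSgeq : Sg = (Neg.neg ⁻¹' P) \ {(-1:ℝ)} := by
    ext x
    simp only [hSg, Set.mem_inter_iff, Set.mem_preimage, Set.mem_Ioo, Set.mem_diff,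
      Set.mem_singleton_iff]
    constructor
    · rintro ⟨hx, hx1, hx2⟩
      exact ⟨hx, by intro h; rw [h] at hx1; linarith⟩
    · rintro ⟨hx, hne⟩
      have hmem := preCantor_subset_Icc hr hr2 k hx
      have h1 : -x ∈ Set.Icc (0:ℝ) 1 := hmem
      refine ⟨hx, ?_, ?_⟩
      · rcases lt_or_eq_of_le (show (-1:ℝ) ≤ x by linarith [h1.2]) with h | h
        · exact h
        · exact absurd h.symm hne
      · linarith [h1.1]
  have hSgvol : volume Sg = ENNReal.ofReal ((2*r)^k) := by
    rw [hSgeq, measure_diff_null (measure_singleton _)]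
    rw [Measure.measure_preimage_neg volume P]
    exact volume_preCantor hr hr2 k
  -- lower bound on F over Sg
  set a : ℝ := lam / 128 with ha
  have hapos : 0 < a := by positivity
  have hFlow : ∀ x ∈ Sg, a ≤ F x := by
    intro x hx
    set y : ℝ := -x with hy
    have hyP : y ∈ P := hx.1
    obtain ⟨θ, hθC, hθd⟩ := exists_cantor_near hr hr2 k y hyP
    have hθ01 : θ ∈ Set.Icc (0:ℝ) 1 := by
      have := Set.mem_iInter.1 hθC 0
      exact this
    have hS1low : a ≤ ‖S1 m fhat (x + t * θ) t‖ := by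
      have hdist : |y - θ| ≤ lam⁻¹ := by rw [hlaminv]; exact hθd
      have h := S1_cantor_lower hm hlam2 hθ01.1 hθ01.2 hdist
      have harg : x + t * θ = -y + (1 - (lam ^ m)⁻¹/8) * θ := by
        rw [hy, ht, hτ]; ring
      have hteq : t = 1 - (lam ^ m)⁻¹/8 := by rw [ht, hτ]
      have hfeq : fhat = fhatL m (lam/8) := by rw [hfhat, hL]
      rw [harg, hteq, hfeq, ha]
      exact h
    exact hS1low.trans (le_biSup_of_bdd (fun t' θ' => hgM t' θ' x) ⟨t, htmem⟩ ⟨θ, hθC⟩)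
  -- integral lower bound
  have hIntlow : a ^ q * (2*r)^k ≤ ∫ x in Set.Ioo (-1:ℝ) 1, F x ^ q := by
    have h1 : a ^ q * (volume Sg).toReal ≤ ∫ x in Sg, F x ^ q :=
      setIntegral_ge_of_const_le_real hSgmeas (by rw [hSgvol]; exact ENNReal.ofReal_ne_top)
        (fun x hx => Real.rpow_le_rpow hapos.le (hFlow x hx) hq0.le)
        (hInt.mono_set hSgsub)
    have h2 : ∫ x in Sg, F x ^ q ≤ ∫ x in Set.Ioo (-1:ℝ) 1, F x ^ q :=
      setIntegral_mono_set hInt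
        (Filter.Eventually.of_forall fun x => Real.rpow_nonneg (hFnn x) q)
        (HasSubset.Subset.eventuallyLE hSgsub)
    have h3 : (volume Sg).toReal = (2*r)^k := by
      rw [hSgvol, ENNReal.toReal_ofReal (by positivity)]
    calc a^q * (2*r)^k = a^q * (volume Sg).toReal := by rw [h3]
      _ ≤ ∫ x in Sg, F x ^ q := h1
      _ ≤ _ := h2
  -- take q-th root
  have hLHS : a * ((2*r)^k) ^ (1/q) ≤ (∫ x in Set.Ioo (-1:ℝ) 1, F x ^ q) ^ (1/q) := by
    have hbase : (0:ℝ) ≤ a^q * (2*r)^k := by positivity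
    have hh := Real.rpow_le_rpow hbase hIntlow (by positivity : (0:ℝ) ≤ 1/q)
    refine le_trans (le_of_eq ?_) hh
    rw [Real.mul_rpow (Real.rpow_nonneg hapos.le q) (by positivity),
      ← Real.rpow_mul hapos.le, mul_one_div_cancel hq0.ne', Real.rpow_one]
  -- Hs bound
  have hlamL : 1 + L ≤ lam := by rw [hL]; linarith
  have hHs : HsNorm s fhat ≤ C₁ * lam ^ (s₀ + 1/2) := by
    have hb2 := Hs_fhatL_bound (m := m) hs₀gt hLpos hlamL hss
    rw [hfhat, hC₁]
    exact hb2
  -- combine with the hypothesis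
  have hineq' : (∫ x in Set.Ioo (-1:ℝ) 1, F x ^ q) ^ (1/q) ≤ C * HsNorm s fhat := by
    simpa only [hF] using hineq
  have hchain : a * ((2*r)^k) ^ (1/q) ≤ C * (C₁ * lam ^ (s₀ + 1/2)) :=
    hLHS.trans (hineq'.trans (mul_le_mul_of_nonneg_left hHs hC.le))
  -- rewrite (2r)^k in terms of lam
  have hlamr : lam = x0 ^ (k:ℝ) := by rw [hlam, Real.rpow_natCast]
  have h2r1 : (2*r : ℝ) = x0 ^ (β - 1) := by
    rw [Real.rpow_sub hx0pos, hxβ, Real.rpow_one, hx0]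
    field_simp
  have h2rk : ((2*r:ℝ))^k = lam ^ (β - 1) := by
    rw [h2r1, ← Real.rpow_natCast (x0 ^ (β-1)) k, ← Real.rpow_mul hx0pos.le,
      hlamr, ← Real.rpow_mul hx0pos.le, mul_comm]
  have h2rkq : (((2*r:ℝ))^k) ^ (1/q) = lam ^ ((β - 1)/q) := by
    rw [h2rk, ← Real.rpow_mul hlampos.le]
    congr 1
    ring
  -- final arithmetic
  have hexp : 1 + (β-1)/q = δ + (s₀ + 1/2) := by
    rw [hδ, hA]
    field_simp [hq0.ne']
    ring
  have hPpos : 0 < lam ^ (s₀ + 1/2) := Real.rpow_pos_of_pos hlampos _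
  have hkey : lam ^ δ * lam ^ (s₀ + 1/2) ≤ 128 * C * (C₁ * lam ^ (s₀ + 1/2)) := by
    have e1 : a * ((2*r)^k) ^ (1/q) = lam ^ δ * lam ^ (s₀ + 1/2) / 128 := by
      rw [ha, h2rkq]
      calc lam / 128 * lam ^ ((β-1)/q) = lam ^ (1:ℝ) * lam ^ ((β-1)/q) / 128 := by
            rw [Real.rpow_one]; ring
        _ = lam ^ (1 + (β-1)/q) / 128 := by rw [← Real.rpow_add hlampos]
        _ = lam ^ (δ + (s₀ + 1/2)) / 128 := by rw [hexp]
        _ = lam ^ δ * lam ^ (s₀ + 1/2) / 128 := by rw [Real.rpow_add hlampos]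
    rw [e1] at hchain
    linarith
  have hfin : lam ^ δ ≤ 128 * C * C₁ := by
    have h2 : lam ^ δ * lam ^ (s₀ + 1/2) ≤ (128 * C * C₁) * lam ^ (s₀ + 1/2) := by
      calc lam ^ δ * lam ^ (s₀ + 1/2) ≤ 128 * C * (C₁ * lam ^ (s₀ + 1/2)) := hkey
        _ = (128 * C * C₁) * lam ^ (s₀ + 1/2) := by ring
    exact le_of_mul_le_mul_right h2 hPpos
  have hbk : b ^ k = lam ^ δ := by
    rw [hb, ← Real.rpow_natCast (x0 ^ δ) k, ← Real.rpow_mul hx0pos.le,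
      hlamr, ← Real.rpow_mul hx0pos.le, mul_comm]
  have hlt : 128 * C * C₁ < lam ^ δ := by
    rw [← hbk]
    exact (le_max_left _ _).trans_lt hk
  linarith
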